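/- A bicolored directed tree T has a bikernel by monochromatic paths if and only if every critical vertex of T is supercritical. -/

import Mathlib

/-- A bicolored digraph is given by two arc relations `A1` (color-1 arcs) and `A2`
(color-2 arcs). A monochromatic path of color `i` is a nonempty chain of `Ai`-arcs,
i.e. `Relation.TransGen Ai`. A set `B` is a bikernel by monochromatic paths if it is
nonempty, independent by monochromatic paths, absorbent with color 1 and dominant
with color 2. -/
def IsBikernel {V : Type*} (A1 A2 : V → V → Prop) (B : Set V) : Prop :=
  B.Nonempty ∧
  (∀ u ∈ B, ∀ v ∈ B, u ≠ v →
    ¬ Relation.TransGen A1 u v ∧ ¬ Relation.TransGen A2 u v) ∧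
  (∀ v, v ∉ B → ∃ b ∈ B, Relation.TransGen A1 v b) ∧
  (∀ v, v ∉ B → ∃ b ∈ B, Relation.TransGen A2 b v)

/-- A vertex is critical if it is a 1-sink (no outgoing color-1 arcs) or a 2-source
(no incoming color-2 arcs). -/
def Critical {V : Type*} (A1 A2 : V → V → Prop) (v : V) : Prop :=
  (∀ w, ¬ A1 v w) ∨ (∀ w, ¬ A2 w v)

/-- A vertex is supercritical if it is both a 1-sink and a 2-source. -/
def Supercritical {V : Type*} (A1 A2 : V → V → Prop) (v : V) : Prop :=
  (∀ w, ¬ A1 v w) ∧ (∀ w, ¬ A2 w v)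

/-- Steps of `A` stay inside the side of the cut edge `s(v,x)`. -/
private lemma aux_no_dicycle {V : Type*} {G : SimpleGraph V} (hG : G.IsAcyclic)
    (A : V → V → Prop) (hsub : ∀ u v, A u v → G.Adj u v)
    (hanti : ∀ u v, A u v → ¬ A v u) : ∀ v, ¬ Relation.TransGen A v v := by
  intro v hv
  obtain ⟨x, hvx, hxv'⟩ := Relation.TransGen.head'_iff.mp hv
  have hvne : v ≠ x := fun h => G.irrefl (h ▸ hsub _ _ hvx)
  have hxv : Relation.TransGen A x v := by
    rcases Relation.reflTransGen_iff_eq_or_transGen.mp hxv' with h | h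
    · exact absurd h hvne
    · exact h
  have hbr : G.IsBridge s(v, x) :=
    (SimpleGraph.isAcyclic_iff_forall_adj_isBridge.mp hG) (hsub _ _ hvx)
  have hnr : ¬ (G \ SimpleGraph.fromEdgeSet {s(v, x)}).Reachable v x :=
    (SimpleGraph.isBridge_iff.mp hbr)
  set G' := G \ SimpleGraph.fromEdgeSet {s(v, x)} with hG'
  have step : ∀ a b, A a b → G'.Reachable x a → G'.Reachable x b := by
    intro a b hab hra
    by_cases he : s(a, b) = s(v, x)
    · rcases Sym2.eq_iff.mp he with ⟨rfl, rfl⟩ | ⟨rfl, rfl⟩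
      · exact SimpleGraph.Reachable.refl _
      · exact absurd hvx (hanti _ _ hab)
    · refine hra.trans (SimpleGraph.Adj.reachable ?_)
      rw [hG', SimpleGraph.sdiff_adj]
      refine ⟨hsub _ _ hab, ?_⟩
      simp [SimpleGraph.fromEdgeSet_adj, he]
  have key : ∀ b, Relation.TransGen A x b → G'.Reachable x b := by
    intro b hb
    induction hb with
    | single h => exact step _ _ h (SimpleGraph.Reachable.refl _)
    | tail _ h ih => exact step _ _ h ih
  exact hnr ((key v hxv).symm)

private lemma aux_sink {V : Type*} [Fintype V] (A : V → V → Prop)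
    (hirr : ∀ v, ¬ Relation.TransGen A v v) (v : V) :
    ∃ b, Relation.ReflTransGen A v b ∧ ∀ w, ¬ A b w := by
  haveI : IsTrans V (fun x y => Relation.TransGen A y x) :=
    ⟨fun _ _ _ h1 h2 => h2.trans h1⟩
  haveI : IsIrrefl V (fun x y => Relation.TransGen A y x) := ⟨fun a => hirr a⟩
  have hwf := Finite.wellFounded_of_trans_of_irrefl (fun x y => Relation.TransGen A y x)
  induction v using hwf.induction with
  | _ v ih =>
    by_cases hs : ∀ w, ¬ A v w
    · exact ⟨v, Relation.ReflTransGen.refl, hs⟩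
    · push_neg at hs
      obtain ⟨w, hw⟩ := hs
      obtain ⟨b, hb1, hb2⟩ := ih w (Relation.TransGen.single hw)
      exact ⟨b, Relation.ReflTransGen.head hw hb1, hb2⟩

private lemma aux_source {V : Type*} [Fintype V] (A : V → V → Prop)
    (hirr : ∀ v, ¬ Relation.TransGen A v v) (v : V) :
    ∃ b, Relation.ReflTransGen A b v ∧ ∀ w, ¬ A w b := by
  obtain ⟨b, hb1, hb2⟩ := aux_sink (fun x y => A y x)
    (fun u h => hirr u (by
      have := Relation.TransGen.swap u u h
      simpa using this)) v
  exact ⟨b, by simpa using Relation.ReflTransGen.swap b v hb1, hb2⟩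

/-- A bicolored directed tree has a bikernel iff every critical vertex is
supercritical. The underlying undirected graph of the digraph (which has no pair
of antiparallel arcs) is required to be a tree. -/
theorem tree_bikernel_iff {V : Type*} [Fintype V] (A1 A2 : V → V → Prop)
    (hanti : ∀ u v, ¬ ((A1 u v ∨ A2 u v) ∧ (A1 v u ∨ A2 v u)))
    (htree : (SimpleGraph.mk (fun a b => A1 a b ∨ A2 a b ∨ A1 b a ∨ A2 b a)
        ⟨fun a b h => by tauto⟩
        ⟨fun a h => hanti a a (by tauto)⟩).IsTree) :
    (∃ B, IsBikernel A1 A2 B) ↔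
      ∀ v, Critical A1 A2 v → Supercritical A1 A2 v := by
  
  set G := SimpleGraph.mk (V := V) (fun a b => A1 a b ∨ A2 a b ∨ A1 b a ∨ A2 b a)
        ⟨fun a b h => by tauto⟩ ⟨fun a h => hanti a a (by tauto)⟩ with hGdef
  set A : V → V → Prop := fun u v => A1 u v ∨ A2 u v with hAdef
  have hsub : ∀ u v, A u v → G.Adj u v := by
    intro u v h; show A1 u v ∨ A2 u v ∨ A1 v u ∨ A2 v u; tauto
  have hanti' : ∀ u v, A u v → ¬ A v u := fun u v h h' => hanti u v ⟨h, h'⟩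
  have hacyc : ∀ v, ¬ Relation.TransGen A v v :=
    aux_no_dicycle htree.IsAcyclic A hsub hanti'
  have hacyc1 : ∀ v, ¬ Relation.TransGen A1 v v := fun v h =>
    hacyc v (Relation.TransGen.mono (by intro a b hab; exact Or.inl hab) v v h)
  have hacyc2 : ∀ v, ¬ Relation.TransGen A2 v v := fun v h =>
    hacyc v (Relation.TransGen.mono (by intro a b hab; exact Or.inr hab) v v h)
  constructor
  · rintro ⟨B, hne, hind, habs, hdom⟩ v hcrit
    rcases hcrit with hsink | hsrc
    · -- v is a 1-sink; show it's a 2-source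
      have hvB : v ∈ B := by
        by_contra hvB
        obtain ⟨b, _, hpath⟩ := habs v hvB
        obtain ⟨w, hw, -⟩ := Relation.TransGen.head'_iff.mp hpath
        exact hsink w hw
      refine ⟨hsink, fun w hw => ?_⟩
      have hwv : w ≠ v := fun h => hanti w v ⟨Or.inr hw, Or.inr (h ▸ hw)⟩
      by_cases hwB : w ∈ B
      · exact (hind w hwB v hvB hwv).2 (Relation.TransGen.single hw)
      · obtain ⟨b, hbB, hpath⟩ := hdom w hwB
        have hbv : Relation.TransGen A2 b v := hpath.tail hw
        by_cases hbe : b = v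
        · exact hacyc2 v (hbe ▸ hbv)
        · exact (hind b hbB v hvB hbe).2 hbv
    · -- v is a 2-source; show it's a 1-sink
      have hvB : v ∈ B := by
        by_contra hvB
        obtain ⟨b, _, hpath⟩ := hdom v hvB
        cases hpath with
        | single h => exact hsrc _ h
        | tail _ h => exact hsrc _ h
      refine ⟨fun w hw => ?_, hsrc⟩
      have hwv : v ≠ w := fun h => hanti v w ⟨Or.inl hw, Or.inl (h ▸ hw)⟩
      by_cases hwB : w ∈ B
      · exact (hind v hvB w hwB hwv).1 (Relation.TransGen.single hw)
      · obtain ⟨b, hbB, hpath⟩ := habs w hwB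
        have hvb : Relation.TransGen A1 v b := hpath.head hw
        by_cases hbe : v = b
        · exact hacyc1 v (hbe ▸ hvb)
        · exact (hind v hvB b hbB hbe).1 hvb
  · intro hcs
    refine ⟨{v | Supercritical A1 A2 v}, ?_, ?_, ?_, ?_⟩
    · -- nonempty
      have : Nonempty V := htree.isConnected.nonempty
      obtain ⟨v⟩ := this
      obtain ⟨b, -, hb2⟩ := aux_sink A1 hacyc1 v
      exact ⟨b, hcs b (Or.inl hb2)⟩
    · -- independence
      rintro u ⟨hu1, hu2⟩ w ⟨hw1, hw2⟩ huw
      constructor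
      · intro h
        obtain ⟨x, hx, -⟩ := Relation.TransGen.head'_iff.mp h
        exact hu1 x hx
      · intro h
        cases h with
        | single h => exact hw2 _ h
        | tail _ h => exact hw2 _ h
    · -- absorbency
      intro v hv
      obtain ⟨b, hb1, hb2⟩ := aux_sink A1 hacyc1 v
      have hbB : Supercritical A1 A2 b := hcs b (Or.inl hb2)
      refine ⟨b, hbB, ?_⟩
      rcases Relation.reflTransGen_iff_eq_or_transGen.mp hb1 with rfl | h
      · exact absurd hbB hv
      · exact h
    · -- dominance
      intro v hv
      obtain ⟨b, hb1, hb2⟩ := aux_source A2 hacyc2 v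
      have hbB : Supercritical A1 A2 b := hcs b (Or.inr hb2)
      refine ⟨b, hbB, ?_⟩
      rcases Relation.reflTransGen_iff_eq_or_transGen.mp hb1 with rfl | h
      · exact absurd hbB hv
      · exact h
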